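/- The map α(z) = z/(1+√(1-z))^2 maps the open unit disc of ℂ into itself, and satisfies z√(1-z)·α'(z) = α(z) on the open unit disc (with the principal branch of the square root). -/

import Mathlib

open Complex

noncomputable def alphaMap (z : ℂ) : ℂ := z / (1 + (1 - z) ^ ((1 : ℂ) / 2)) ^ 2

lemma aux_re (z : ℂ) (hz : ‖z‖ < 1) : 0 < ((1 : ℂ) - z).re := by
  have := Complex.abs_re_le_norm z
  simp [Complex.sub_re]
  have : z.re ≤ ‖z‖ := (le_abs_self _).trans (by simpa using Complex.abs_re_le_norm z)
  linarith

lemma aux_wre (z : ℂ) (hz : ‖z‖ < 1) : 0 < (((1 : ℂ) - z) ^ ((1:ℂ)/2)).re := by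
  have hre := aux_re z hz
  have hz0 : (1 : ℂ) - z ≠ 0 := by
    intro h; rw [h] at hre; simp at hre
  rw [Complex.cpow_def_of_ne_zero hz0, Complex.exp_re]
  have harg : |Complex.arg (1 - z)| < Real.pi / 2 :=
    Complex.abs_arg_lt_pi_div_two_iff.mpr (Or.inl hre)
  have him : (Complex.log (1 - z) * ((1:ℂ)/2)).im = Complex.arg (1 - z) / 2 := by
    simp [Complex.mul_im, Complex.log_im]
    ring
  rw [him]
  have hc : 0 < Real.cos (Complex.arg (1 - z) / 2) := by
    apply Real.cos_pos_of_mem_Ioo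
    constructor
    · cases' abs_lt.mp harg with h1 h2; linarith [Real.pi_pos]
    · cases' abs_lt.mp harg with h1 h2; linarith [Real.pi_pos]
  positivity

theorem stmt5 :
    (∀ z : ℂ, ‖z‖ < 1 → ‖alphaMap z‖ < 1) ∧
    (∀ z : ℂ, ‖z‖ < 1 → ∃ d : ℂ, HasDerivAt alphaMap d z ∧
      z * (1 - z) ^ ((1 : ℂ) / 2) * d = alphaMap z) := by
  have basic : ∀ z : ℂ, ‖z‖ < 1 →
      ((1:ℂ) - z ≠ 0) ∧ (((1 - z) ^ ((1:ℂ)/2)) * ((1 - z) ^ ((1:ℂ)/2)) = 1 - z)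
        ∧ (1 + (1 - z) ^ ((1:ℂ)/2) ≠ 0) := by
    intro z hz
    have hre := aux_re z hz
    have hz0 : (1 : ℂ) - z ≠ 0 := by intro h; rw [h] at hre; simp at hre
    refine ⟨hz0, ?_, ?_⟩
    · rw [← Complex.cpow_add _ _ hz0]
      norm_num
    · intro h
      have hwre := aux_wre z hz
      have : ((1 : ℂ) + (1 - z) ^ ((1:ℂ)/2)).re = 0 := by rw [h]; simp
      simp [Complex.add_re] at this
      linarith
  constructor
  · intro z hz
    obtain ⟨hz0, hw2, h1w⟩ := basic z hz
    set w := ((1:ℂ) - z) ^ ((1:ℂ)/2) with hw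
    have hwre := aux_wre z hz
    have hα : alphaMap z = (1 - w) / (1 + w) := by
      unfold alphaMap
      rw [← hw]
      rw [div_eq_div_iff (pow_ne_zero 2 h1w) h1w]
      linear_combination (1 + w) * hw2
    rw [hα]
    rw [norm_div, div_lt_one (norm_pos_iff.mpr h1w)]
    · have h1 : Complex.normSq (1 - w) < Complex.normSq (1 + w) := by
        simp [Complex.normSq_apply, Complex.add_re, Complex.add_im, Complex.sub_re,
          Complex.sub_im]
        nlinarith
      have := Real.sqrt_lt_sqrt (Complex.normSq_nonneg _) h1
      simpa [Complex.norm_def] using this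
  · intro z hz
    obtain ⟨hz0, hw2, h1w⟩ := basic z hz
    set w := ((1:ℂ) - z) ^ ((1:ℂ)/2) with hw
    have hwre := aux_wre z hz
    have hw0 : w ≠ 0 := by
      intro h; rw [← hw, h] at hwre; simp at hwre
    set u := ((1:ℂ) - z) ^ ((1:ℂ)/2 - 1) with hu
    have hwu : w * u = 1 := by
      rw [hw, hu, ← Complex.cpow_add _ _ hz0]
      norm_num
    have hslit : (1:ℂ) - z ∈ Complex.slitPlane :=
      Complex.mem_slitPlane_iff.mpr (Or.inl (aux_re z hz))
    have hgderiv := ((hasDerivAt_id z).const_sub (1:ℂ)).cpow_const (c := (1:ℂ)/2) hslit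
    have hden := ((hasDerivAt_const z (1:ℂ)).add hgderiv).pow 2
    have hne : ((1:ℂ) + w) ^ 2 ≠ 0 := pow_ne_zero _ h1w
    have hne' : ((1:ℂ) + ((1:ℂ)-z) ^ ((1:ℂ)/2)) ^ 2 ≠ 0 := by rw [← hw]; exact hne
    have hd := (hasDerivAt_id z).div hden hne'
    refine ⟨_, hd, ?_⟩
    unfold alphaMap
    simp only [id_eq]
    push_cast
    simp only [Pi.add_apply, Pi.pow_apply]
    rw [← hw, ← hu]
    rw [← mul_div_assoc, div_eq_div_iff (pow_ne_zero 2 hne) hne]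
    linear_combination z*(1+w)^3*hw2 + z^2*(1+w)^3*hwu
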